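/- Let γ = 1.4. Define u_φ and p on (0,∞) as in the Gresho vortex: u_φ(r) = 5r on (0,0.2), 2 − 5r on [0.2,0.4), 0 on [0.4,∞); p(r) = 5 + (25/2)r² on (0,0.2), 9 + (25/2)r² − 20r + 4·ln(5r) on [0.2,0.4), 3 + 4·ln 2 on [0.4,∞). On the open set Ω = {(x,y) ∈ ℝ² : r := √(x²+y²) ∉ {0, 0.2, 0.4}} define the velocity field (u,w)(x,y) = (u_φ(r))·(−y/r, x/r), density ρ ≡ 1, pressure P(x,y) = p(r), and energy E(x,y) = ½·ρ·(u² + w²) + P/(γ−1). Then all fields are differentiable on Ω and the time-independent fields solve the two-dimensional Euler equations on Ω, i.e. for all (x,y) ∈ Ω: ∂ₓ(ρu) + ∂ᵧ(ρw) = 0, ∂ₓ(ρu² + P) + ∂ᵧ(ρuw) = 0, ∂ₓ(ρuw) + ∂ᵧ(ρw² + P) = 0, and ∂ₓ(u(E+P)) + ∂ᵧ(w(E+P)) = 0. -/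

import Mathlib

open Real Filter

/-- Azimuthal velocity profile of the Gresho vortex. -/
noncomputable def uφ (r : ℝ) : ℝ :=
  if r < 0.2 then 5 * r
  else if r < 0.4 then 2 - 5 * r
  else 0

/-- Radial pressure profile of the Gresho vortex. -/
noncomputable def pGresho (r : ℝ) : ℝ :=
  if r < 0.2 then 5 + (25 / 2) * r ^ 2
  else if r < 0.4 then 9 + (25 / 2) * r ^ 2 - 20 * r + 4 * Real.log (5 * r)
  else 3 + 4 * Real.log 2

/-- Radius `r = √(x² + y²)`. -/
noncomputable def rad (q : ℝ × ℝ) : ℝ := Real.sqrt (q.1 ^ 2 + q.2 ^ 2)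

/-- The open set on which the Gresho fields are smooth: radii away from
`0`, `0.2` and `0.4`. -/
def Ω : Set (ℝ × ℝ) := {q | rad q ≠ 0 ∧ rad q ≠ 0.2 ∧ rad q ≠ 0.4}

/-- Density `ρ ≡ 1`. -/
noncomputable def ρG (_ : ℝ × ℝ) : ℝ := 1

/-- Horizontal velocity component `u = uφ(r)·(−y/r)`. -/
noncomputable def uG (q : ℝ × ℝ) : ℝ := uφ (rad q) * (-q.2 / rad q)

/-- Vertical velocity component `w = uφ(r)·(x/r)`. -/
noncomputable def wG (q : ℝ × ℝ) : ℝ := uφ (rad q) * (q.1 / rad q)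

/-- Pressure field `P(x,y) = p(r)`. -/
noncomputable def PG (q : ℝ × ℝ) : ℝ := pGresho (rad q)

/-- Energy density `E = ½ρ(u²+w²) + P/(γ−1)` with `γ = 1.4`. -/
noncomputable def EG (q : ℝ × ℝ) : ℝ :=
  (1 / 2) * ρG q * (uG q ^ 2 + wG q ^ 2) + PG q / (1.4 - 1)

lemma rad_sq (q : ℝ × ℝ) : rad q ^ 2 = q.1 ^ 2 + q.2 ^ 2 :=
  Real.sq_sqrt (by positivity)

lemma continuous_rad : Continuous rad :=
  Real.continuous_sqrt.comp (by fun_prop)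

lemma loc {q : ℝ × ℝ} (hq : q ∈ Ω) :
    ∃ a b c : ℝ, ∀ᶠ p in nhds q, 0 < rad p ∧ uφ (rad p) = a + b * rad p ∧
      pGresho (rad p) = c + b ^ 2 / 2 * rad p ^ 2 + 2 * a * b * rad p
        + a ^ 2 * Real.log (rad p) := by
  obtain ⟨h0, h2, h4⟩ := hq
  have hr0 : 0 < rad q := lt_of_le_of_ne (Real.sqrt_nonneg _) (Ne.symm h0)
  by_cases h1 : rad q < 0.2
  · refine ⟨0, 5, 5, ?_⟩
    have hmem : ∀ᶠ p in nhds q, rad p ∈ Set.Ioo (0:ℝ) 0.2 :=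
      continuous_rad.continuousAt.eventually_mem (isOpen_Ioo.mem_nhds ⟨hr0, h1⟩)
    filter_upwards [hmem] with p hp
    refine ⟨hp.1, ?_, ?_⟩
    · simp only [uφ, if_pos hp.2]; ring
    · simp only [pGresho, if_pos hp.2]; ring
  · by_cases h3 : rad q < 0.4
    · have hgt : (0.2:ℝ) < rad q := lt_of_le_of_ne (not_lt.1 h1) (Ne.symm h2)
      refine ⟨2, -5, 9 + 4 * Real.log 5, ?_⟩
      have hmem : ∀ᶠ p in nhds q, rad p ∈ Set.Ioo (0.2:ℝ) 0.4 :=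
        continuous_rad.continuousAt.eventually_mem (isOpen_Ioo.mem_nhds ⟨hgt, h3⟩)
      filter_upwards [hmem] with p hp
      have hp0 : (0:ℝ) < rad p := lt_trans (by norm_num) hp.1
      refine ⟨hp0, ?_, ?_⟩
      · simp only [uφ, if_neg (not_lt.2 hp.1.le), if_pos hp.2]; ring
      · simp only [pGresho, if_neg (not_lt.2 hp.1.le), if_pos hp.2]
        rw [Real.log_mul (by norm_num) hp0.ne']
        ring
    · have hgt : (0.4:ℝ) < rad q := lt_of_le_of_ne (not_lt.1 h3) (Ne.symm h4)
      refine ⟨0, 0, 3 + 4 * Real.log 2, ?_⟩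
      have hmem : ∀ᶠ p in nhds q, rad p ∈ Set.Ioi (0.4:ℝ) :=
        continuous_rad.continuousAt.eventually_mem (isOpen_Ioi.mem_nhds hgt)
      filter_upwards [hmem] with p hp
      have hp0 : (0:ℝ) < rad p := lt_trans (by norm_num) hp
      have h1' : ¬ rad p < 0.2 := not_lt.2 (le_trans (by norm_num) hp.le)
      have h3' : ¬ rad p < 0.4 := not_lt.2 hp.le
      refine ⟨hp0, ?_, ?_⟩
      · simp only [uφ, if_neg h1', if_neg h3']; ring
      · simp only [pGresho, if_neg h1', if_neg h3']; ring

set_option maxHeartbeats 2000000 in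
lemma euler_at {x y : ℝ} (hq : (x, y) ∈ Ω) :
    DifferentiableAt ℝ uG (x, y) ∧ DifferentiableAt ℝ wG (x, y) ∧
    DifferentiableAt ℝ PG (x, y) ∧ DifferentiableAt ℝ EG (x, y) ∧
    (deriv (fun t => ρG (t, y) * uG (t, y)) x +
        deriv (fun t => ρG (x, t) * wG (x, t)) y = 0 ∧
     deriv (fun t => ρG (t, y) * uG (t, y) ^ 2 + PG (t, y)) x +
        deriv (fun t => ρG (x, t) * uG (x, t) * wG (x, t)) y = 0 ∧
     deriv (fun t => ρG (t, y) * uG (t, y) * wG (t, y)) x +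
        deriv (fun t => ρG (x, t) * wG (x, t) ^ 2 + PG (x, t)) y = 0 ∧
     deriv (fun t => uG (t, y) * (EG (t, y) + PG (t, y))) x +
        deriv (fun t => wG (x, t) * (EG (x, t) + PG (x, t))) y = 0) := by
  obtain ⟨a, b, c, hS⟩ := loc hq
  have hself := hS.self_of_nhds
  have hr : 0 < rad (x, y) := hself.1
  have hrne : rad (x, y) ≠ 0 := hr.ne'
  have hsq : rad (x, y) ^ 2 = x ^ 2 + y ^ 2 := rad_sq (x, y)
  have hx2 : (0:ℝ) < x ^ 2 + y ^ 2 := by nlinarith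
  -- differentiability of rad
  have dr : DifferentiableAt ℝ rad (x, y) := by
    have h : DifferentiableAt ℝ (fun p : ℝ × ℝ => p.1 ^ 2 + p.2 ^ 2) (x, y) := by fun_prop
    exact h.sqrt hx2.ne'
  -- differentiability of the fields
  have du : DifferentiableAt ℝ uG (x, y) := by
    refine DifferentiableAt.congr_of_eventuallyEq
      (f := fun p => (a + b * rad p) * (-p.2) * (rad p)⁻¹) ?_ ?_
    · exact (((differentiableAt_const a).add (dr.const_mul b)).mul
        (by fun_prop : DifferentiableAt ℝ (fun p : ℝ × ℝ => -p.2) (x, y))).mul (dr.inv hrne)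
    · filter_upwards [hS] with p hp
      simp only [uG, hp.2.1]; ring
  have dw : DifferentiableAt ℝ wG (x, y) := by
    refine DifferentiableAt.congr_of_eventuallyEq
      (f := fun p => (a + b * rad p) * p.1 * (rad p)⁻¹) ?_ ?_
    · exact (((differentiableAt_const a).add (dr.const_mul b)).mul
        (by fun_prop : DifferentiableAt ℝ (fun p : ℝ × ℝ => p.1) (x, y))).mul (dr.inv hrne)
    · filter_upwards [hS] with p hp
      simp only [wG, hp.2.1]; ring
  have dP : DifferentiableAt ℝ PG (x, y) := by
    refine DifferentiableAt.congr_of_eventuallyEq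
      (f := fun p => c + b ^ 2 / 2 * rad p ^ 2 + 2 * a * b * rad p
        + a ^ 2 * Real.log (rad p)) ?_ ?_
    · exact (((differentiableAt_const c).add ((dr.pow 2).const_mul _)).add
        (dr.const_mul _)).add ((dr.log hrne).const_mul _)
    · filter_upwards [hS] with p hp
      simp only [PG, hp.2.2]
  have dρ : DifferentiableAt ℝ ρG (x, y) := differentiableAt_const 1
  have dE : DifferentiableAt ℝ EG (x, y) := by
    have h : EG = fun q => (1/2 : ℝ) * ρG q * (uG q ^ 2 + wG q ^ 2)
        + ((1.4:ℝ) - 1)⁻¹ * PG q := by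
      funext p; simp only [EG]; ring
    rw [h]
    exact (((differentiableAt_const (1/2 : ℝ)).mul dρ).mul
      ((du.pow 2).add (dw.pow 2))).add (dP.const_mul _)
  -- slice derivatives of the radius
  have hfx : HasDerivAt (fun t => rad (t, y)) (x / rad (x, y)) x := by
    have h1 : HasDerivAt (fun t : ℝ => t ^ 2 + y ^ 2) (2 * x) x := by
      simpa using (hasDerivAt_pow 2 x).add_const (y ^ 2)
    have h2 := h1.sqrt hx2.ne'
    have h3 : (2 * x) / (2 * Real.sqrt (x ^ 2 + y ^ 2)) = x / rad (x, y) := by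
      have h4 : rad (x, y) = Real.sqrt (x ^ 2 + y ^ 2) := rfl
      rw [h4]; ring
    rw [← h3]
    exact h2
  have hfy : HasDerivAt (fun t => rad (x, t)) (y / rad (x, y)) y := by
    have h1 : HasDerivAt (fun t : ℝ => x ^ 2 + t ^ 2) (2 * y) y := by
      simpa using (hasDerivAt_pow 2 y).const_add (x ^ 2)
    have h2 := h1.sqrt hx2.ne'
    have h3 : (2 * y) / (2 * Real.sqrt (x ^ 2 + y ^ 2)) = y / rad (x, y) := by
      have h4 : rad (x, y) = Real.sqrt (x ^ 2 + y ^ 2) := rfl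
      rw [h4]; ring
    rw [← h3]
    exact h2
  -- slice versions of the local description
  have hSx : ∀ᶠ t in nhds x, 0 < rad (t, y) ∧ uφ (rad (t, y)) = a + b * rad (t, y) ∧
      pGresho (rad (t, y)) = c + b ^ 2 / 2 * rad (t, y) ^ 2 + 2 * a * b * rad (t, y)
        + a ^ 2 * Real.log (rad (t, y)) := by
    have hc : ContinuousAt (fun t : ℝ => (t, y)) x := by fun_prop
    exact hc.eventually hS
  have hSy : ∀ᶠ t in nhds y, 0 < rad (x, t) ∧ uφ (rad (x, t)) = a + b * rad (x, t) ∧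
      pGresho (rad (x, t)) = c + b ^ 2 / 2 * rad (x, t) ^ 2 + 2 * a * b * rad (x, t)
        + a ^ 2 * Real.log (rad (x, t)) := by
    have hc : ContinuousAt (fun t : ℝ => (x, t)) y := by fun_prop
    exact hc.eventually hS
  -- building blocks, x-slice
  have hA1 : HasDerivAt (fun t => a + b * rad (t, y)) (b * (x / rad (x, y))) x :=
    (hfx.const_mul b).const_add a
  have hu1 := hA1.mul ((hasDerivAt_const x (-y)).div hfx hrne)
  have hw1 := hA1.mul ((hasDerivAt_id x).div hfx hrne)
  have hP1 := ((((hfx.pow 2).const_mul (b ^ 2 / 2)).const_add c).add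
    (hfx.const_mul (2 * a * b))).add ((hfx.log hrne).const_mul (a ^ 2))
  -- building blocks, y-slice
  have hA2 : HasDerivAt (fun t => a + b * rad (x, t)) (b * (y / rad (x, y))) y :=
    (hfy.const_mul b).const_add a
  have hu2 := hA2.mul (((hasDerivAt_id y).neg).div hfy hrne)
  have hw2 := hA2.mul ((hasDerivAt_const y x).div hfy hrne)
  have hP2 := ((((hfy.pow 2).const_mul (b ^ 2 / 2)).const_add c).add
    (hfy.const_mul (2 * a * b))).add ((hfy.log hrne).const_mul (a ^ 2))
  -- energy rewriting
  have hkey : ∀ p : ℝ × ℝ, 0 < rad p → uφ (rad p) = a + b * rad p →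
      EG p = 1 / 2 * (a + b * rad p) ^ 2 + pGresho (rad p) / (1.4 - 1) := by
    intro p hp hu'
    have hs := rad_sq p
    have hne : rad p ≠ 0 := hp.ne'
    have h1 : (-p.2 / rad p) ^ 2 + (p.1 / rad p) ^ 2 = 1 := by
      field_simp
      linarith [hs]
    simp only [EG, ρG, uG, wG, PG, hu']
    rw [mul_pow, mul_pow, ← mul_add, h1, mul_one]
    ring
  refine ⟨du, dw, dP, dE, ?_, ?_, ?_, ?_⟩
  · -- mass
    have e1x : (fun t => ρG (t, y) * uG (t, y)) =ᶠ[nhds x]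
        (fun t => 1 * ((a + b * rad (t, y)) * (-y / rad (t, y)))) := by
      filter_upwards [hSx] with t ht
      simp only [ρG, uG]
      rw [ht.2.1]
    have e1y : (fun t => ρG (x, t) * wG (x, t)) =ᶠ[nhds y]
        (fun t => 1 * ((a + b * rad (x, t)) * (x / rad (x, t)))) := by
      filter_upwards [hSy] with t ht
      simp only [ρG, wG]
      rw [ht.2.1]
    have d1 := e1x.deriv_eq.trans (HasDerivAt.const_mul (1 : ℝ) hu1).deriv
    have d2 := e1y.deriv_eq.trans (HasDerivAt.const_mul (1 : ℝ) hw2).deriv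
    rw [d1, d2]
    simp only [Pi.mul_apply, Pi.div_apply, Pi.add_apply, Pi.pow_apply, Pi.neg_apply, id_eq, id]
    field_simp
    ring
  · -- x-momentum
    have e2x : (fun t => ρG (t, y) * uG (t, y) ^ 2 + PG (t, y)) =ᶠ[nhds x]
        (fun t => 1 * ((a + b * rad (t, y)) * (-y / rad (t, y))) ^ 2 +
          (c + b ^ 2 / 2 * rad (t, y) ^ 2 + 2 * a * b * rad (t, y)
            + a ^ 2 * Real.log (rad (t, y)))) := by
      filter_upwards [hSx] with t ht
      simp only [ρG, uG, PG]
      rw [ht.2.1, ht.2.2]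
    have e2y : (fun t => ρG (x, t) * uG (x, t) * wG (x, t)) =ᶠ[nhds y]
        (fun t => 1 * ((a + b * rad (x, t)) * (-t / rad (x, t))) *
          ((a + b * rad (x, t)) * (x / rad (x, t)))) := by
      filter_upwards [hSy] with t ht
      simp only [ρG, uG, wG]
      rw [ht.2.1]
    have d1 := e2x.deriv_eq.trans ((HasDerivAt.const_mul (1 : ℝ) (hu1.pow 2)).add hP1).deriv
    have d2 := e2y.deriv_eq.trans ((HasDerivAt.const_mul (1 : ℝ) hu2).mul hw2).deriv
    rw [d1, d2]
    simp only [Pi.mul_apply, Pi.div_apply, Pi.add_apply, Pi.pow_apply, Pi.neg_apply, id_eq, id]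
    field_simp
    have hi : rad (x, y) * (rad (x, y))⁻¹ = 1 := mul_inv_cancel₀ hrne
    linear_combination (-(4*a^2*y^2*x) - 4*rad (x, y)*a*b*y^2*x) * hi
  · -- y-momentum
    have e3x : (fun t => ρG (t, y) * uG (t, y) * wG (t, y)) =ᶠ[nhds x]
        (fun t => 1 * ((a + b * rad (t, y)) * (-y / rad (t, y))) *
          ((a + b * rad (t, y)) * (t / rad (t, y)))) := by
      filter_upwards [hSx] with t ht
      simp only [ρG, uG, wG]
      rw [ht.2.1]
    have e3y : (fun t => ρG (x, t) * wG (x, t) ^ 2 + PG (x, t)) =ᶠ[nhds y]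
        (fun t => 1 * ((a + b * rad (x, t)) * (x / rad (x, t))) ^ 2 +
          (c + b ^ 2 / 2 * rad (x, t) ^ 2 + 2 * a * b * rad (x, t)
            + a ^ 2 * Real.log (rad (x, t)))) := by
      filter_upwards [hSy] with t ht
      simp only [ρG, wG, PG]
      rw [ht.2.1, ht.2.2]
    have d1 := e3x.deriv_eq.trans ((HasDerivAt.const_mul (1 : ℝ) hu1).mul hw1).deriv
    have d2 := e3y.deriv_eq.trans ((HasDerivAt.const_mul (1 : ℝ) (hw2.pow 2)).add hP2).deriv
    rw [d1, d2]
    simp only [Pi.mul_apply, Pi.div_apply, Pi.add_apply, Pi.pow_apply, Pi.neg_apply, id_eq, id]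
    field_simp
    have hi : rad (x, y) * (rad (x, y))⁻¹ = 1 := mul_inv_cancel₀ hrne
    linear_combination (-(4*a*b*rad (x, y)*x^2*y) - 4*a^2*x^2*y) * hi
  · -- energy
    have e4x : (fun t => uG (t, y) * (EG (t, y) + PG (t, y))) =ᶠ[nhds x]
        (fun t => ((a + b * rad (t, y)) * (-y / rad (t, y))) *
          ((1 / 2 * (a + b * rad (t, y)) ^ 2 +
            (c + b ^ 2 / 2 * rad (t, y) ^ 2 + 2 * a * b * rad (t, y)
              + a ^ 2 * Real.log (rad (t, y))) / (1.4 - 1)) +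
           (c + b ^ 2 / 2 * rad (t, y) ^ 2 + 2 * a * b * rad (t, y)
              + a ^ 2 * Real.log (rad (t, y))))) := by
      filter_upwards [hSx] with t ht
      rw [hkey (t, y) ht.1 ht.2.1]
      simp only [uG, PG]
      rw [ht.2.1, ht.2.2]
    have e4y : (fun t => wG (x, t) * (EG (x, t) + PG (x, t))) =ᶠ[nhds y]
        (fun t => ((a + b * rad (x, t)) * (x / rad (x, t))) *
          ((1 / 2 * (a + b * rad (x, t)) ^ 2 +
            (c + b ^ 2 / 2 * rad (x, t) ^ 2 + 2 * a * b * rad (x, t)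
              + a ^ 2 * Real.log (rad (x, t))) / (1.4 - 1)) +
           (c + b ^ 2 / 2 * rad (x, t) ^ 2 + 2 * a * b * rad (x, t)
              + a ^ 2 * Real.log (rad (x, t))))) := by
      filter_upwards [hSy] with t ht
      rw [hkey (x, t) ht.1 ht.2.1]
      simp only [wG, PG]
      rw [ht.2.1, ht.2.2]
    have hE1 := ((hA1.pow 2).const_mul (1 / 2 : ℝ)).add (hP1.div_const ((1.4 : ℝ) - 1))
    have hE2 := ((hA2.pow 2).const_mul (1 / 2 : ℝ)).add (hP2.div_const ((1.4 : ℝ) - 1))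
    have d1 := e4x.deriv_eq.trans (hu1.mul (hE1.add hP1)).deriv
    have d2 := e4y.deriv_eq.trans (hw2.mul (hE2.add hP2)).deriv
    rw [d1, d2]
    simp only [Pi.mul_apply, Pi.div_apply, Pi.add_apply, Pi.pow_apply, Pi.neg_apply, id_eq, id]
    field_simp
    ring

theorem gresho_stationary_euler :
    DifferentiableOn ℝ ρG Ω ∧
    DifferentiableOn ℝ uG Ω ∧
    DifferentiableOn ℝ wG Ω ∧
    DifferentiableOn ℝ PG Ω ∧
    DifferentiableOn ℝ EG Ω ∧
    (∀ q ∈ Ω,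
      deriv (fun x => ρG (x, q.2) * uG (x, q.2)) q.1 +
          deriv (fun y => ρG (q.1, y) * wG (q.1, y)) q.2 = 0 ∧
      deriv (fun x => ρG (x, q.2) * uG (x, q.2) ^ 2 + PG (x, q.2)) q.1 +
          deriv (fun y => ρG (q.1, y) * uG (q.1, y) * wG (q.1, y)) q.2 = 0 ∧
      deriv (fun x => ρG (x, q.2) * uG (x, q.2) * wG (x, q.2)) q.1 +
          deriv (fun y => ρG (q.1, y) * wG (q.1, y) ^ 2 + PG (q.1, y)) q.2 = 0 ∧
      deriv (fun x => uG (x, q.2) * (EG (x, q.2) + PG (x, q.2))) q.1 +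
          deriv (fun y => wG (q.1, y) * (EG (q.1, y) + PG (q.1, y))) q.2 = 0) := by
  refine ⟨fun q _ => (differentiableAt_const 1).differentiableWithinAt,
    fun q hq => ?_, fun q hq => ?_, fun q hq => ?_, fun q hq => ?_, fun q hq => ?_⟩
  · obtain ⟨x, y⟩ := q; exact (euler_at hq).1.differentiableWithinAt
  · obtain ⟨x, y⟩ := q; exact (euler_at hq).2.1.differentiableWithinAt
  · obtain ⟨x, y⟩ := q; exact (euler_at hq).2.2.1.differentiableWithinAt
  · obtain ⟨x, y⟩ := q; exact (euler_at hq).2.2.2.1.differentiableWithinAt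
  · obtain ⟨x, y⟩ := q; exact (euler_at hq).2.2.2.2
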